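/- For every real x > 0, 1 < (2π)^{-1/2} · x^{1/2 − x} · e^x · Γ(x) < e^{1/(12x)}. -/

import Mathlib

open Real Finset

noncomputable def pNorm {n : ℕ} (p : ℝ) (v : Fin n → ℝ) : ℝ :=
  (∑ j, |v j| ^ p) ^ (1 / p)

noncomputable def signVec (m : ℕ) (s : Fin m → Bool) : Fin m → ℝ :=
  fun i => if s i then 1 else -1

noncomputable def expRademacher (m : ℕ) (f : (Fin m → ℝ) → ℝ) : ℝ :=
  (∑ s : Fin m → Bool, f (signVec m s)) / 2 ^ m

open Filter Topology



lemma artanh_lower (t : ℝ) (h0 : 0 < t) (h1 : t < 1) :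
    2 * t < Real.log (1 + t) - Real.log (1 - t) := by
  set f : ℝ → ℝ := fun u => Real.log (1 + u) - Real.log (1 - u) - 2 * u with hf
  have hmono : StrictMonoOn f (Set.Ico 0 1) := by
    apply strictMonoOn_of_deriv_pos (convex_Ico 0 1)
    · apply ContinuousOn.sub
      apply ContinuousOn.sub
      · exact (continuousOn_const.add continuousOn_id).log
          (fun u hu => by rw [Set.mem_Ico] at hu; have := hu.1; intro h; simp only [Pi.add_apply, id] at h; nlinarith)
      · exact (continuousOn_const.sub continuousOn_id).log
          (fun u hu => by rw [Set.mem_Ico] at hu; simp; nlinarith [hu.1, hu.2])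
      · exact continuousOn_const.mul continuousOn_id
    · intro u hu
      rw [interior_Ico] at hu
      obtain ⟨hu0, hu1⟩ := hu
      have h1u : (0:ℝ) < 1 + u := by linarith
      have h2u : (0:ℝ) < 1 - u := by linarith
      have d1 : HasDerivAt (fun u : ℝ => Real.log (1 + u)) (1/(1+u)) u := by
        have := ((hasDerivAt_id' (𝕜 := ℝ) u).const_add 1).log h1u.ne'
        simpa using this
      have d2 : HasDerivAt (fun u : ℝ => Real.log (1 - u)) (-1/(1-u)) u :=
        ((hasDerivAt_id' (𝕜 := ℝ) u).const_sub 1).log h2u.ne'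
      have d : HasDerivAt f (1/(1+u) - (-1/(1-u)) - 2 * 1) u :=
        (d1.sub d2).sub ((hasDerivAt_id' (𝕜 := ℝ) u).const_mul 2)
      rw [d.deriv]
      have : 1/(1+u) - (-1/(1-u)) - 2 * 1 = 2*u^2/((1+u)*(1-u)) := by
        field_simp; ring
      rw [this]; positivity
  have h := hmono (by constructor <;> norm_num) (Set.mem_Ico.mpr ⟨le_of_lt h0, h1⟩) h0
  simp only [hf] at h
  norm_num at h
  linarith

lemma artanh_upper (t : ℝ) (h0 : 0 < t) (h1 : t < 1) :
    Real.log (1 + t) - Real.log (1 - t) < 2 * t + 2 * t ^ 3 / (3 * (1 - t ^ 2)) := by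
  set f : ℝ → ℝ := fun u => 2 * u + 2 * u ^ 3 / (3 * (1 - u ^ 2))
      - (Real.log (1 + u) - Real.log (1 - u)) with hf
  have key : ∀ u, 0 ≤ u → u < 1 → (0:ℝ) < 1 - u ^ 2 ∨ u = 0 := by
    intro u h0u h1u; left; nlinarith
  have hmono : StrictMonoOn f (Set.Ico 0 1) := by
    apply strictMonoOn_of_deriv_pos (convex_Ico 0 1)
    · apply ContinuousOn.sub
      · apply ContinuousOn.add (continuousOn_const.mul continuousOn_id)
        apply ContinuousOn.div
        · exact continuousOn_const.mul (continuousOn_pow 3)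
        · exact continuousOn_const.mul (continuousOn_const.sub (continuousOn_pow 2))
        · intro u hu; rw [Set.mem_Ico] at hu
          have : (0:ℝ) < 1 - u ^ 2 := by nlinarith [hu.1, hu.2]
          positivity
      · apply ContinuousOn.sub
        · exact (continuousOn_const.add continuousOn_id).log
            (fun u hu => by rw [Set.mem_Ico] at hu; have := hu.1; intro h; simp only [Pi.add_apply, id] at h; nlinarith)
        · exact (continuousOn_const.sub continuousOn_id).log
            (fun u hu => by rw [Set.mem_Ico] at hu; simp; nlinarith [hu.1, hu.2])
    · intro u hu
      rw [interior_Ico] at hu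
      obtain ⟨hu0, hu1⟩ := hu
      have h1u : (0:ℝ) < 1 + u := by linarith
      have h2u : (0:ℝ) < 1 - u := by linarith
      have h3u : (0:ℝ) < 1 - u ^ 2 := by nlinarith
      have d1 : HasDerivAt (fun u : ℝ => Real.log (1 + u)) (1/(1+u)) u := by
        have := ((hasDerivAt_id' (𝕜 := ℝ) u).const_add 1).log h1u.ne'
        simpa using this
      have d2 : HasDerivAt (fun u : ℝ => Real.log (1 - u)) (-1/(1-u)) u :=
        ((hasDerivAt_id' (𝕜 := ℝ) u).const_sub 1).log h2u.ne'
      have d3 : HasDerivAt (fun u : ℝ => 2 * u ^ 3 / (3 * (1 - u ^ 2)))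
          ((2 * (3 * u ^ 2) * (3 * (1 - u ^ 2)) - 2 * u ^ 3 * (3 * (-(2 * u))))
            / (3 * (1 - u ^ 2)) ^ 2) u := by
        apply HasDerivAt.div
        · exact (hasDerivAt_pow 3 u).const_mul 2
        · have : HasDerivAt (fun u : ℝ => 1 - u ^ 2) (-(2*u)) u := by
            simpa using ((hasDerivAt_pow 2 u).const_sub 1)
          exact this.const_mul 3
        · positivity
      have d : HasDerivAt f
          (2 * 1 + (2 * (3 * u ^ 2) * (3 * (1 - u ^ 2)) - 2 * u ^ 3 * (3 * (-(2 * u))))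
            / (3 * (1 - u ^ 2)) ^ 2 - (1/(1+u) - -1/(1-u))) u :=
        (((hasDerivAt_id' (𝕜 := ℝ) u).const_mul 2).add d3).sub (d1.sub d2)
      rw [d.deriv]
      have heq : 2 * 1 + (2 * (3 * u ^ 2) * (3 * (1 - u ^ 2)) - 2 * u ^ 3 * (3 * (-(2 * u))))
            / (3 * (1 - u ^ 2)) ^ 2 - (1/(1+u) - -1/(1-u))
          = 4 * u ^ 4 / (3 * (1 - u ^ 2) ^ 2) := by
        have h4 : (1+u)*(1-u) = 1 - u^2 := by ring
        field_simp
        ring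
      rw [heq]; positivity
  have h := hmono (by constructor <;> norm_num) (Set.mem_Ico.mpr ⟨le_of_lt h0, h1⟩) h0
  simp only [hf] at h
  norm_num at h
  linarith


noncomputable def gBinet (x : ℝ) : ℝ := (x + 1/2) * (Real.log (x+1) - Real.log x) - 1


lemma log_ratio_eq {x : ℝ} (hx : 0 < x) :
    Real.log (1 + 1/(2*x+1)) - Real.log (1 - 1/(2*x+1)) = Real.log (x+1) - Real.log x := by
  have h1 : (1:ℝ) + 1/(2*x+1) = (2*(x+1))/(2*x+1) := by field_simp; ring
  have h2 : (1:ℝ) - 1/(2*x+1) = (2*x)/(2*x+1) := by field_simp; ring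
  rw [h1, h2]
  rw [Real.log_div (by positivity) (by positivity), Real.log_div (by positivity) (by positivity),
    Real.log_mul (by norm_num) (by positivity), Real.log_mul (by norm_num) hx.ne']
  ring

lemma gBinet_pos {x : ℝ} (hx : 0 < x) : 0 < gBinet x := by
  have ht0 : (0:ℝ) < 1/(2*x+1) := by positivity
  have ht1 : 1/(2*x+1) < 1 := by rw [div_lt_one (by positivity)]; linarith
  have h := artanh_lower _ ht0 ht1
  rw [log_ratio_eq hx] at h
  have hx2 : (0:ℝ) < x + 1/2 := by linarith
  have : (x + 1/2) * (2 * (1/(2*x+1))) = 1 := by field_simp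
  have h2 := mul_lt_mul_of_pos_left h hx2
  rw [this] at h2
  unfold gBinet; linarith

lemma gBinet_lt {x : ℝ} (hx : 0 < x) : gBinet x < 1/(12*x) - 1/(12*(x+1)) := by
  have ht0 : (0:ℝ) < 1/(2*x+1) := by positivity
  have ht1 : 1/(2*x+1) < 1 := by rw [div_lt_one (by positivity)]; linarith
  have h := artanh_upper _ ht0 ht1
  rw [log_ratio_eq hx] at h
  have hx2 : (0:ℝ) < x + 1/2 := by linarith
  have h2 := mul_lt_mul_of_pos_left h hx2
  have key : (x + 1/2) * (2 * (1/(2*x+1)) + 2 * (1/(2*x+1)) ^ 3 / (3 * (1 - (1/(2*x+1)) ^ 2)))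
      = 1 + (1/(12*x) - 1/(12*(x+1))) := by
    have h3 : (0:ℝ) < 2*x+1 := by linarith
    have h4 : (1:ℝ) - (1/(2*x+1))^2 = (4*x*(x+1))/(2*x+1)^2 := by field_simp; ring
    rw [h4]
    field_simp
    ring
  rw [key] at h2
  unfold gBinet; linarith



noncomputable def muB (x : ℝ) : ℝ :=
  Real.log (Real.Gamma x) + (1/2 - x) * Real.log x + x - Real.log (2*π) / 2

lemma muB_rec {x : ℝ} (hx : 0 < x) : muB x = gBinet x + muB (x+1) := by
  have hG : Real.Gamma (x+1) = x * Real.Gamma x := Real.Gamma_add_one hx.ne'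
  unfold muB gBinet
  rw [hG, Real.log_mul hx.ne' (Real.Gamma_pos_of_pos hx).ne']
  ring

lemma muB_sum (x : ℝ) (hx : 0 < x) (n : ℕ) :
    muB x = (∑ k ∈ Finset.range n, gBinet (x + k)) + muB (x + n) := by
  induction n with
  | zero => simp
  | succ n ih =>
    rw [ih, Finset.sum_range_succ, muB_rec (show (0:ℝ) < x + n by positivity)]
    push_cast
    ring_nf

lemma tendsto_gBinet_nat : Tendsto (fun n : ℕ => gBinet n) atTop (𝓝 0) := by
  apply squeeze_zero' (g := fun n : ℕ => 1 / (n:ℝ))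
  · filter_upwards [eventually_gt_atTop 0] with n hn
    exact (gBinet_pos (by exact_mod_cast hn)).le
  · filter_upwards [eventually_gt_atTop 0] with n hn
    have hn' : (0:ℝ) < n := by exact_mod_cast hn
    have h := gBinet_lt hn'
    have h1 : (0:ℝ) < 1/(12*((n:ℝ)+1)) := by positivity
    have h2 : 1/(12*(n:ℝ)) ≤ 1/(n:ℝ) := by
      rw [div_le_div_iff₀ (by positivity) hn']; nlinarith
    linarith
  · exact tendsto_one_div_atTop_nhds_zero_nat

lemma muB_nat_eq (n : ℕ) (hn : 1 ≤ n) :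
    muB (n + 1) = Real.log (Stirling.stirlingSeq n) - Real.log π / 2 - gBinet n := by
  have hn' : (0:ℝ) < n := by exact_mod_cast hn
  rw [Stirling.log_stirlingSeq_formula]
  unfold muB gBinet
  have hfac : Real.Gamma ((n:ℝ) + 1) = (n.factorial : ℝ) := Real.Gamma_nat_eq_factorial n
  rw [hfac, Real.log_div (by positivity) (exp_ne_zero 1), Real.log_exp,
    Real.log_mul two_ne_zero hn'.ne', Real.log_mul two_ne_zero pi_ne_zero]
  ring




lemma tendsto_muB_nat : Tendsto (fun n : ℕ => muB (n + 1)) atTop (𝓝 0) := by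
  have h1 : Tendsto (fun n : ℕ => Real.log (Stirling.stirlingSeq n)) atTop
      (𝓝 (Real.log (Real.sqrt π))) :=
    (Real.continuousAt_log (by positivity)).tendsto.comp Stirling.tendsto_stirlingSeq_sqrt_pi
  have hlog : Real.log (Real.sqrt π) = Real.log π / 2 := Real.log_sqrt pi_pos.le
  rw [hlog] at h1
  have h2 := (h1.sub_const (Real.log π / 2)).sub tendsto_gBinet_nat
  simp only [sub_self, sub_zero] at h2
  apply h2.congr'
  filter_upwards [eventually_ge_atTop 1] with n hn
  exact (muB_nat_eq n hn).symm

set_option maxHeartbeats 2000000 in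
lemma muB_sandwich (m : ℕ) (hm : 1 ≤ m) (s : ℝ) (hs0 : 0 ≤ s) (hs1 : s < 1) :
    muB (m+1) - 1/(2*(m+1)) ≤ muB (m + s) ∧
      muB (m + s) ≤ muB (m+1) + gBinet m + 1/(2*(m+s)) := by
  have hm' : (1:ℝ) ≤ (m:ℝ) := by exact_mod_cast hm
  set y : ℝ := (m:ℝ) + s with hy
  clear_value y
  have hm0 : (0:ℝ) < m := by linarith
  have hy0 : (0:ℝ) < y := by rw [hy]; linarith
  have hym : (m:ℝ) ≤ y := by rw [hy]; linarith
  have hym1 : y ≤ (m:ℝ) + 1 := by rw [hy]; linarith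
  have cvx := Real.convexOn_log_Gamma
  -- convexity (a): log Γ(y) ≤ log Γ(m+1) - (1-s) * log m
  have hGm1 : Real.Gamma ((m:ℝ)+1) = (m:ℝ) * Real.Gamma m := Real.Gamma_add_one hm0.ne'
  have hGy1 : Real.Gamma (y+1) = y * Real.Gamma y := Real.Gamma_add_one hy0.ne'
  have lGm1 : Real.log (Real.Gamma ((m:ℝ)+1)) = Real.log m + Real.log (Real.Gamma m) := by
    rw [hGm1, Real.log_mul hm0.ne' (Real.Gamma_pos_of_pos hm0).ne']
  have lGy1 : Real.log (Real.Gamma (y+1)) = Real.log y + Real.log (Real.Gamma y) := by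
    rw [hGy1, Real.log_mul hy0.ne' (Real.Gamma_pos_of_pos hy0).ne']
  have ha : Real.log (Real.Gamma y) ≤
      (1-s) * Real.log (Real.Gamma m) + s * Real.log (Real.Gamma ((m:ℝ)+1)) := by
    have := cvx.2 (Set.mem_Ioi.mpr hm0) (Set.mem_Ioi.mpr (by linarith : (0:ℝ) < (m:ℝ)+1))
      (by linarith : (0:ℝ) ≤ 1 - s) hs0 (by ring)
    simp only [smul_eq_mul, Function.comp_apply] at this
    have harg : (1-s) * (m:ℝ) + s * ((m:ℝ)+1) = y := by rw [hy]; ring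
    rwa [harg] at this
  have hb : Real.log (Real.Gamma ((m:ℝ)+1)) ≤
      s * Real.log (Real.Gamma y) + (1-s) * Real.log (Real.Gamma (y+1)) := by
    have := cvx.2 (Set.mem_Ioi.mpr hy0) (Set.mem_Ioi.mpr (by linarith : (0:ℝ) < y+1))
      hs0 (by linarith : (0:ℝ) ≤ 1 - s) (by ring)
    simp only [smul_eq_mul, Function.comp_apply] at this
    have harg : s * y + (1-s) * (y+1) = (m:ℝ)+1 := by rw [hy]; ring
    rwa [harg] at this
  -- log concavity estimates
  have e1 : s / y ≤ Real.log y - Real.log (m:ℝ) := by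
    have := Real.log_le_sub_one_of_pos (show (0:ℝ) < (m:ℝ)/y by positivity)
    rw [Real.log_div hm0.ne' hy0.ne'] at this
    have : Real.log (m:ℝ) - Real.log y ≤ (m:ℝ)/y - 1 := this
    have h2 : (m:ℝ)/y - 1 = -(s/y) := by field_simp; rw [hy]; ring
    linarith [h2 ▸ this]
  have e2 : (1-s) / ((m:ℝ)+1) ≤ Real.log ((m:ℝ)+1) - Real.log y := by
    have h0 : (0:ℝ) < (m:ℝ)+1 := by linarith
    have := Real.log_le_sub_one_of_pos (show (0:ℝ) < y/((m:ℝ)+1) by positivity)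
    rw [Real.log_div hy0.ne' h0.ne'] at this
    have h2 : y/((m:ℝ)+1) - 1 = -((1-s)/((m:ℝ)+1)) := by field_simp; rw [hy]; ring
    linarith [h2 ▸ this]
  have lm := Real.log (m:ℝ)
  have hlogy_up : Real.log (Real.Gamma y) ≤ Real.log (Real.Gamma ((m:ℝ)+1)) - (1-s) * Real.log (m:ℝ) := by
    rw [lGm1] at ha ⊢
    nlinarith [ha]
  have hlogy_lo : Real.log (Real.Gamma ((m:ℝ)+1)) - (1-s) * Real.log y ≤ Real.log (Real.Gamma y) := by
    rw [lGy1] at hb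
    nlinarith [hb]
  constructor
  · -- lower bound
    have key : (m:ℝ)+1/2 ≥ 0 := by linarith
    have p1 : ((m:ℝ)+1/2) * ((1-s)/((m:ℝ)+1)) ≤ ((m:ℝ)+1/2) * (Real.log ((m:ℝ)+1) - Real.log y) :=
      mul_le_mul_of_nonneg_left e2 key
    have p2 : ((m:ℝ)+1/2) * ((1-s)/((m:ℝ)+1)) = (1-s) - (1-s)/(2*((m:ℝ)+1)) := by
      field_simp; ring
    have p3 : (1-s)/(2*((m:ℝ)+1)) ≤ 1/(2*((m:ℝ)+1)) := by
      apply div_le_div_of_nonneg_right _ (by linarith)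
      · linarith
    rw [hy] at hlogy_lo p1 ⊢
    unfold muB
    nlinarith [hlogy_lo, p1, p2, p3]
  · -- upper bound
    have key : y - 1/2 ≥ 0 := by linarith
    have p1 : (y - 1/2) * (s/y) ≤ (y - 1/2) * (Real.log y - Real.log (m:ℝ)) :=
      mul_le_mul_of_nonneg_left e1 key
    have p2 : (y - 1/2) * (s/y) = s - s/(2*y) := by field_simp
    have p3 : s/(2*y) ≤ 1/(2*y) := by
      apply div_le_div_of_nonneg_right _ (by linarith)
      · linarith
    rw [hy] at key p1 p2 p3 hlogy_up ⊢
    simp only [muB, gBinet]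
    nlinarith [hlogy_up, p1, p2, p3]



set_option maxHeartbeats 1000000 in
lemma tendsto_muB_shift (x : ℝ) (hx : 0 < x) :
    Tendsto (fun n : ℕ => muB (x + n)) atTop (𝓝 0) := by
  set k : ℕ := ⌊x⌋₊ with hk
  set s : ℝ := x - k with hs
  have hs0 : 0 ≤ s := by rw [hs]; simp [hk]; exact Nat.floor_le hx.le
  have hs1 : s < 1 := by rw [hs]; have := Nat.lt_floor_add_one x; linarith
  clear_value k s
  have hA : Tendsto (fun n : ℕ => muB ((k + n : ℕ) + 1)) atTop (𝓝 0) := by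
    have hcomp : Tendsto (fun n : ℕ => k + n) atTop atTop :=
      tendsto_atTop_mono (fun n => Nat.le_add_left n k) tendsto_id
    exact tendsto_muB_nat.comp hcomp
  have hB : Tendsto (fun n : ℕ => 1 / (n:ℝ)) atTop (𝓝 0) := tendsto_one_div_atTop_nhds_zero_nat
  have hlow : Tendsto (fun n : ℕ => muB ((k + n : ℕ) + 1) - 1/(n:ℝ)) atTop (𝓝 0) := by
    simpa using hA.sub hB
  have hup : Tendsto (fun n : ℕ => muB ((k + n : ℕ) + 1) + 2/(n:ℝ)) atTop (𝓝 0) := by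
    have h2 : Tendsto (fun n : ℕ => 2 / (n:ℝ)) atTop (𝓝 0) :=
      tendsto_const_div_atTop_nhds_zero_nat 2
    simpa using hA.add h2
  apply tendsto_of_tendsto_of_tendsto_of_le_of_le' hlow hup
  · filter_upwards [eventually_ge_atTop 1] with n hn
    have hm : 1 ≤ k + n := le_add_left hn
    have h := (muB_sandwich (k + n) hm s hs0 hs1).1
    have harg : ((k + n : ℕ) : ℝ) + s = x + n := by push_cast; rw [hs]; push_cast; ring
    rw [harg] at h
    have hn' : (1:ℝ) ≤ (n:ℝ) := by exact_mod_cast hn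
    have hb : 1/(2*(((k+n:ℕ):ℝ)+1)) ≤ 1/(n:ℝ) := by
      apply div_le_div_of_nonneg_left one_pos.le (by positivity)
      push_cast; linarith [Nat.cast_nonneg (α := ℝ) k]
    linarith
  · filter_upwards [eventually_ge_atTop 1] with n hn
    have hm : 1 ≤ k + n := le_add_left hn
    have h := (muB_sandwich (k + n) hm s hs0 hs1).2
    have harg : ((k + n : ℕ) : ℝ) + s = x + n := by push_cast; rw [hs]; push_cast; ring
    rw [harg] at h
    have hn' : (1:ℝ) ≤ (n:ℝ) := by exact_mod_cast hn
    have hkn : (0:ℝ) < ((k+n:ℕ):ℝ) := by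
      push_cast; have := Nat.cast_nonneg (α := ℝ) k; linarith
    have hg := gBinet_lt hkn
    have hg2 : gBinet ((k+n:ℕ):ℝ) ≤ 1/(n:ℝ) := by
      have e1 : (0:ℝ) < 1/(12*(((k+n:ℕ):ℝ)+1)) := by positivity
      have e2 : 1/(12*((k+n:ℕ):ℝ)) ≤ 1/(n:ℝ) := by
        apply div_le_div_of_nonneg_left one_pos.le (by positivity)
        push_cast; have := Nat.cast_nonneg (α := ℝ) k; linarith
      linarith
    have hb : 1/(2*(((k+n:ℕ):ℝ)+s)) ≤ 1/(n:ℝ) := by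
      apply div_le_div_of_nonneg_left one_pos.le (by positivity)
      push_cast; have := Nat.cast_nonneg (α := ℝ) k; linarith
    rw [harg] at hb
    have : 2/(n:ℝ) = 1/(n:ℝ) + 1/(n:ℝ) := by ring
    linarith

lemma muB_bounds {x : ℝ} (hx : 0 < x) : 0 ≤ muB x ∧ muB x ≤ 1/(12*x) := by
  have hS : Tendsto (fun n : ℕ => ∑ k ∈ Finset.range n, gBinet (x + k)) atTop (𝓝 (muB x)) := by
    have h := (tendsto_muB_shift x hx).const_sub (muB x)
    simp only [sub_zero] at h
    apply h.congr
    intro n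
    rw [muB_sum x hx n]; ring
  constructor
  · apply ge_of_tendsto hS
    filter_upwards with n
    apply Finset.sum_nonneg
    intro k _
    exact (gBinet_pos (by positivity)).le
  · apply le_of_tendsto hS
    filter_upwards with n
    calc ∑ k ∈ Finset.range n, gBinet (x + k)
        ≤ ∑ k ∈ Finset.range n, (1/(12*(x+k)) - 1/(12*(x+k+1))) := by
          apply Finset.sum_le_sum
          intro k _
          have := gBinet_lt (show (0:ℝ) < x + k by positivity)
          have harg : x + (k:ℝ) + 1 = x + ((k:ℕ):ℝ) + 1 := by norm_num
          linarith
      _ = 1/(12*(x+(0:ℕ))) - 1/(12*(x+(n:ℕ))) := by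
          have := Finset.sum_range_sub' (f := fun k : ℕ => 1/(12*(x+(k:ℝ)))) n
          rw [← this]
          apply Finset.sum_congr rfl
          intro k _
          push_cast
          ring_nf
      _ ≤ 1/(12*x) := by
          have h1 : (0:ℝ) < 12*(x+(n:ℕ)) := by positivity
          simp only [Nat.cast_zero, add_zero]
          have : (0:ℝ) ≤ 1/(12*(x+(n:ℕ))) := by positivity
          linarith

/-- Two-sided Stirling-type bound: 1 < (2π)^{-1/2} x^{1/2-x} e^x Γ(x) < e^{1/(12x)}. -/
theorem stirling_two_sided (x : ℝ) (hx : 0 < x) :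
    1 < (2 * π) ^ (-(1 / 2) : ℝ) * x ^ (1 / 2 - x) * Real.exp x * Real.Gamma x ∧
      (2 * π) ^ (-(1 / 2) : ℝ) * x ^ (1 / 2 - x) * Real.exp x * Real.Gamma x <
        Real.exp (1 / (12 * x)) := by
  have h2pi : (0:ℝ) < 2 * π := by positivity
  have hG : (0:ℝ) < Real.Gamma x := Real.Gamma_pos_of_pos hx
  have hF : (2 * π) ^ (-(1 / 2) : ℝ) * x ^ (1 / 2 - x) * Real.exp x * Real.Gamma x
      = Real.exp (muB x) := by
    rw [Real.rpow_def_of_pos h2pi, Real.rpow_def_of_pos hx, ← Real.exp_log hG,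
      ← Real.exp_add, ← Real.exp_add, ← Real.exp_add]
    unfold muB
    ring_nf
  have hstrict : 0 < muB x ∧ muB x < 1/(12*x) := by
    have h1 := muB_rec hx
    have h2 := (muB_bounds (show (0:ℝ) < x + 1 by linarith)).1
    have h3 := (muB_bounds (show (0:ℝ) < x + 1 by linarith)).2
    have h4 := gBinet_pos hx
    have h5 := gBinet_lt hx
    constructor
    · linarith
    · linarith
  rw [hF]
  constructor
  · rw [show (1:ℝ) = Real.exp 0 by simp]
    exact Real.exp_lt_exp.mpr hstrict.1
  · apply Real.exp_lt_exp.mpr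
    have : 1/(12*x) = 1/(12*x) := rfl
    linarith [hstrict.2]
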